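/- Let X be a finite metric space whose metric d takes integer values in {0,1,…,n} and which is distance-invariant, i.e., for every radius t the cardinality of the ball B(x,t) = {y ∈ X : d(x,y) ≤ t} does not depend on the center x. Then for every subset Z = {z_1,…,z_N} ⊆ X of size N, the quadratic discrepancy satisfies D^{L2}(Z) = (1/2)·[ (1/|X|²)·Σ_{x,y∈X} Σ_{u∈X} |d(x,u) − d(y,u)| − (1/N²)·Σ_{i,j=1}^N Σ_{u∈X} |d(z_i,u) − d(z_j,u)| ]. -/

import Mathlib

lemma st_sum_ind_le {n a : ℕ} (ha : a ≤ n) :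
    ∑ t ∈ Finset.range (n+1), (if a ≤ t then (1:ℝ) else 0) = (n+1 : ℝ) - a := by
  rw [Finset.sum_boole]
  have : (Finset.range (n+1)).filter (fun t => a ≤ t) = Finset.Ico a (n+1) := by
    ext t; simp [Finset.mem_filter, Finset.mem_range, Finset.mem_Ico]; omega
  rw [this, Nat.card_Ico]
  push_cast [Nat.cast_sub (by omega : a ≤ n+1)]
  ring

lemma st_sum_ind_lt {n a : ℕ} (ha : a ≤ n) :
    ∑ t ∈ Finset.range n, (if t < a then (1:ℝ) else 0) = (a : ℝ) := by
  rw [Finset.sum_boole]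
  have : (Finset.range n).filter (fun t => t < a) = Finset.range a := by
    ext t; simp; omega
  rw [this, Finset.card_range]

lemma st_sum_ind_max {n a b : ℕ} (ha : a ≤ n) (hb : b ≤ n) :
    ∑ t ∈ Finset.range (n+1), (if a ≤ t then (1:ℝ) else 0) * (if b ≤ t then 1 else 0)
      = (n+1 : ℝ) - ((a:ℝ) + b + |(a:ℝ) - b|)/2 := by
  have h1 : ∀ t, (if a ≤ t then (1:ℝ) else 0) * (if b ≤ t then 1 else 0)
      = if max a b ≤ t then (1:ℝ) else 0 := by
    intro t; by_cases h1 : a ≤ t <;> by_cases h2 : b ≤ t <;> simp [h1, h2, max_le_iff]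
  rw [Finset.sum_congr rfl (fun t _ => h1 t), st_sum_ind_le (by omega : max a b ≤ n)]
  rcases le_total a b with h | h
  · rw [max_eq_right h, abs_of_nonpos (sub_nonpos.mpr (Nat.cast_le.mpr h : (_:ℝ) ≤ _))]
    push_cast; ring
  · rw [max_eq_left h, abs_of_nonneg (sub_nonneg.mpr (Nat.cast_le.mpr h : (_:ℝ) ≤ _))]
    push_cast; ring

lemma st_sum_ind_min {n a b : ℕ} (ha : a ≤ n) (hb : b ≤ n) :
    ∑ t ∈ Finset.range n, (if t < a then (1:ℝ) else 0) * (if t < b then 1 else 0)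
      = ((a:ℝ) + b - |(a:ℝ) - b|)/2 := by
  have h1 : ∀ t, (if t < a then (1:ℝ) else 0) * (if t < b then 1 else 0)
      = if t < min a b then (1:ℝ) else 0 := by
    intro t; by_cases h1 : t < a <;> by_cases h2 : t < b <;> simp [h1, h2, lt_min_iff]
  rw [Finset.sum_congr rfl (fun t _ => h1 t), st_sum_ind_lt (by omega : min a b ≤ n)]
  rcases le_total a b with h | h
  · rw [min_eq_left h, abs_of_nonpos (sub_nonpos.mpr (Nat.cast_le.mpr h : (_:ℝ) ≤ _))]
    push_cast; ring
  · rw [min_eq_right h, abs_of_nonneg (sub_nonneg.mpr (Nat.cast_le.mpr h : (_:ℝ) ≤ _))]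
    push_cast; ring

theorem stolarsky_invariance_finite_metric
    {X : Type*} [Fintype X] (n : ℕ) (d : X → X → ℕ)
    (h_self : ∀ x, d x x = 0)
    (h_sep : ∀ x y, d x y = 0 → x = y)
    (h_symm : ∀ x y, d x y = d y x)
    (h_tri : ∀ x y z, d x z ≤ d x y + d y z)
    (h_le : ∀ x y, d x y ≤ n)
    (h_inv : ∀ (t : ℕ) (x y : X),
      (Finset.univ.filter (fun z => d x z ≤ t)).card
        = (Finset.univ.filter (fun z => d y z ≤ t)).card)
    (Z : Finset X) (hZ : Z.Nonempty) :
    ∑ t ∈ Finset.range (n + 1), ∑ x : X,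
        ((Z.card : ℝ)⁻¹ * ((Z.filter (fun z => d x z ≤ t)).card : ℝ)
          - (Fintype.card X : ℝ)⁻¹ *
              ((Finset.univ.filter (fun z : X => d x z ≤ t)).card : ℝ)) ^ 2
      = (1 / 2) *
        ((Fintype.card X : ℝ)⁻¹ ^ 2 *
            ∑ x : X, ∑ y : X, ∑ u : X, |(d x u : ℝ) - (d y u : ℝ)|
          - (Z.card : ℝ)⁻¹ ^ 2 *
            ∑ z₁ ∈ Z, ∑ z₂ ∈ Z, ∑ u : X, |(d z₁ u : ℝ) - (d z₂ u : ℝ)|) := by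
  classical
  obtain ⟨z₀, hz₀⟩ := hZ
  have hXne : Nonempty X := ⟨z₀⟩
  set I : X → X → ℕ → ℝ := fun x z t => if d x z ≤ t then 1 else 0 with hIdef
  set Mr : ℝ := (Fintype.card X : ℝ) with hMrdef
  set Nr : ℝ := (Z.card : ℝ) with hNrdef
  have hN0 : Nr ≠ 0 := by
    simp only [hNrdef]
    exact_mod_cast (Finset.card_pos.mpr ⟨z₀, hz₀⟩).ne'
  have hM0 : Mr ≠ 0 := by
    simp only [hMrdef]
    exact_mod_cast Fintype.card_pos.ne'
  set L : X → X → ℝ := fun y z => ∑ u : X, |(d y u : ℝ) - (d z u : ℝ)| with hLdef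
  set g : X → ℝ := fun y => ∑ x : X, (d x y : ℝ) with hgdef
  set K : X → X → ℝ :=
    fun y z => ∑ t ∈ Finset.range (n+1), ∑ x : X, I x y t * I x z t with hKdef
  set b : ℕ → ℝ := fun t => ((Finset.univ.filter (fun u : X => d z₀ u ≤ t)).card : ℝ)
    with hbdef
  set c1 : ℝ := ∑ t ∈ Finset.range n, (Mr - b t) with hc1def
  -- counting lemma
  have hcount : ∀ (t : ℕ) (z : X),
      ∑ x : X, (if t < d z x then (1:ℝ) else 0) = Mr - b t := by
    intro t z
    rw [Finset.sum_boole]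
    have heq : Finset.univ.filter (fun x : X => t < d z x)
        = Finset.univ.filter (fun x : X => ¬ d z x ≤ t) := by
      ext x; simp [Finset.mem_filter, not_le]
    have key := Finset.card_filter_add_card_filter_not
      (s := (Finset.univ : Finset X)) (p := fun x : X => d z x ≤ t)
    have hb' : (Finset.univ.filter (fun x : X => d z x ≤ t)).card
        = (Finset.univ.filter (fun u : X => d z₀ u ≤ t)).card := h_inv t z z₀
    have hcard : (Finset.univ.filter (fun x : X => t < d z x)).card
        = Fintype.card X - (Finset.univ.filter (fun u : X => d z₀ u ≤ t)).card := by
      rw [heq]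
      simp only [Finset.card_univ] at key
      omega
    rw [hcard]
    have hle : (Finset.univ.filter (fun u : X => d z₀ u ≤ t)).card ≤ Fintype.card X := by
      simpa using Finset.card_filter_le (Finset.univ : Finset X) (fun u : X => d z₀ u ≤ t)
    push_cast [Nat.cast_sub hle]
    rfl
  -- g is constant
  have hg : ∀ z : X, g z = c1 := by
    intro z
    have h1 : g z = ∑ x : X, ∑ t ∈ Finset.range n, (if t < d z x then (1:ℝ) else 0) := by
      refine Finset.sum_congr rfl fun x _ => ?_
      rw [st_sum_ind_lt (h_le z x), h_symm]
    rw [h1, Finset.sum_comm, hc1def]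
    exact Finset.sum_congr rfl fun t _ => hcount t z
  -- K formula
  have hK : ∀ y z : X, K y z = Mr * (n+1) - (g y + g z)/2 - L y z / 2 := by
    intro y z
    have h0 : K y z = ∑ x : X, ∑ t ∈ Finset.range (n+1), I x y t * I x z t :=
      Finset.sum_comm
    have hpt : ∀ x : X, ∑ t ∈ Finset.range (n+1), I x y t * I x z t
        = (n+1:ℝ) - ((d x y:ℝ) + (d x z:ℝ) + |(d x y:ℝ) - (d x z:ℝ)|)/2 :=
      fun x => st_sum_ind_max (h_le x y) (h_le x z)
    rw [h0, Finset.sum_congr rfl fun x _ => hpt x, Finset.sum_sub_distrib]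
    simp only [Finset.sum_const, Finset.card_univ, nsmul_eq_mul, ← Finset.sum_div,
      Finset.sum_add_distrib]
    have hLyz : ∑ x : X, |(d x y:ℝ) - (d x z:ℝ)| = L y z := by
      refine Finset.sum_congr rfl fun x _ => ?_
      rw [h_symm x y, h_symm x z]
    rw [hLyz]
    simp only [hgdef, hMrdef]
    ring
  -- sums of L with one free index are constant
  set c2 : ℝ := 2 * Mr * c1 - 2 * ∑ t ∈ Finset.range n, (Mr - b t)^2 with hc2def
  have hc : ∀ z : X, ∑ u : X, L z u = c2 := by
    intro z
    have habs : ∀ w u : X, |(d z w : ℝ) - (d u w : ℝ)|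
        = (d z w : ℝ) + (d u w : ℝ)
          - 2 * ∑ t ∈ Finset.range n,
              (if t < d z w then (1:ℝ) else 0) * (if t < d u w then 1 else 0) := by
      intro w u
      rw [st_sum_ind_min (h_le z w) (h_le u w)]
      ring
    have h1 : ∑ u : X, L z u
        = ∑ u : X, ∑ w : X, ((d z w : ℝ) + (d u w : ℝ)
            - 2 * ∑ t ∈ Finset.range n,
              (if t < d z w then (1:ℝ) else 0) * (if t < d u w then 1 else 0)) := by
      exact Finset.sum_congr rfl fun u _ => Finset.sum_congr rfl fun w _ => habs w u
    have hgz : ∀ y : X, ∑ w : X, (d y w : ℝ) = c1 := by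
      intro y
      rw [← hg y]
      exact Finset.sum_congr rfl fun w _ => by rw [h_symm y w]
    rw [h1]
    simp only [Finset.sum_sub_distrib, Finset.sum_add_distrib, ← Finset.mul_sum]
    have e1 : ∑ u : X, ∑ w : X, (d z w : ℝ) = Mr * c1 := by
      rw [Finset.sum_congr rfl fun u (_ : u ∈ Finset.univ) => hgz z]
      simp [Finset.card_univ, hMrdef]
    have e2 : ∑ u : X, ∑ w : X, (d u w : ℝ) = Mr * c1 := by
      rw [Finset.sum_congr rfl fun u (_ : u ∈ Finset.univ) => hgz u]
      simp [Finset.card_univ, hMrdef, mul_comm]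
    have e3 : ∑ u : X, ∑ w : X, ∑ t ∈ Finset.range n,
        (if t < d z w then (1:ℝ) else 0) * (if t < d u w then 1 else 0)
        = ∑ t ∈ Finset.range n, (Mr - b t)^2 := by
      rw [Finset.sum_comm]
      calc ∑ w : X, ∑ u : X, ∑ t ∈ Finset.range n,
            (if t < d z w then (1:ℝ) else 0) * (if t < d u w then 1 else 0)
          = ∑ w : X, ∑ t ∈ Finset.range n, ∑ u : X,
            (if t < d z w then (1:ℝ) else 0) * (if t < d u w then 1 else 0) :=
            Finset.sum_congr rfl fun w _ => Finset.sum_comm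
        _ = ∑ t ∈ Finset.range n, ∑ w : X, ∑ u : X,
            (if t < d z w then (1:ℝ) else 0) * (if t < d u w then 1 else 0) :=
            Finset.sum_comm
        _ = ∑ t ∈ Finset.range n, (Mr - b t)^2 := by
            refine Finset.sum_congr rfl fun t _ => ?_
            have hin : ∀ w : X, ∑ u : X,
                (if t < d z w then (1:ℝ) else 0) * (if t < d u w then 1 else 0)
                = (if t < d z w then (1:ℝ) else 0) * (Mr - b t) := by
              intro w
              rw [← Finset.mul_sum]
              congr 1
              rw [← hcount t w]
              exact Finset.sum_congr rfl fun u _ => by rw [h_symm w u]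
            rw [Finset.sum_congr rfl fun w (_ : w ∈ Finset.univ) => hin w,
              ← Finset.sum_mul, hcount t z]
            ring
    rw [e1, e2, e3, hc2def]
    ring
  -- expansion of the LHS
  have hcardZ : ∀ (x : X) (t : ℕ),
      ((Z.filter (fun z => d x z ≤ t)).card : ℝ) = ∑ z ∈ Z, I x z t := by
    intro x t
    rw [Finset.card_filter]
    push_cast
    rfl
  have hcardX : ∀ (x : X) (t : ℕ),
      ((Finset.univ.filter (fun z : X => d x z ≤ t)).card : ℝ) = ∑ u : X, I x u t := by
    intro x t
    rw [Finset.card_filter]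
    push_cast
    rfl
  have hswap : ∀ (s₁ s₂ : Finset X),
      ∑ t ∈ Finset.range (n+1), ∑ x : X, ∑ z ∈ s₁, ∑ z' ∈ s₂, I x z t * I x z' t
      = ∑ z ∈ s₁, ∑ z' ∈ s₂, K z z' := by
    intro s₁ s₂
    calc ∑ t ∈ Finset.range (n+1), ∑ x : X, ∑ z ∈ s₁, ∑ z' ∈ s₂, I x z t * I x z' t
        = ∑ t ∈ Finset.range (n+1), ∑ z ∈ s₁, ∑ z' ∈ s₂, ∑ x : X, I x z t * I x z' t := by
          refine Finset.sum_congr rfl fun t _ => ?_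
          rw [Finset.sum_comm]
          exact Finset.sum_congr rfl fun z _ => Finset.sum_comm
      _ = ∑ z ∈ s₁, ∑ t ∈ Finset.range (n+1), ∑ z' ∈ s₂, ∑ x : X, I x z t * I x z' t :=
          Finset.sum_comm
      _ = ∑ z ∈ s₁, ∑ z' ∈ s₂, K z z' :=
          Finset.sum_congr rfl fun z _ => Finset.sum_comm
  have hpt : ∀ (t : ℕ) (x : X),
      (Nr⁻¹ * ∑ z ∈ Z, I x z t - Mr⁻¹ * ∑ u : X, I x u t)^2
      = Nr⁻¹^2 * ∑ z ∈ Z, ∑ z' ∈ Z, I x z t * I x z' t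
        - 2*(Nr⁻¹*Mr⁻¹) * ∑ z ∈ Z, ∑ u : X, I x z t * I x u t
        + Mr⁻¹^2 * ∑ u : X, ∑ u' : X, I x u t * I x u' t := by
    intro t x
    rw [← Finset.sum_mul_sum, ← Finset.sum_mul_sum, ← Finset.sum_mul_sum]
    ring
  have hK' : ∀ y z : X, K y z = Mr*(n+1) - c1 - L y z / 2 := by
    intro y z; rw [hK, hg, hg]; ring
  have hsumK : ∀ (s₁ s₂ : Finset X), ∑ z ∈ s₁, ∑ z' ∈ s₂, K z z'
      = (s₁.card : ℝ) * (s₂.card : ℝ) * (Mr*(n+1) - c1)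
        - (∑ z ∈ s₁, ∑ z' ∈ s₂, L z z')/2 := by
    intro s₁ s₂
    simp only [hK', Finset.sum_sub_distrib, Finset.sum_const, nsmul_eq_mul, ← Finset.sum_div]
    ring
  have hZX : ∑ z ∈ Z, ∑ u : X, K z u = Nr * Mr * (Mr*(n+1) - c1) - (Nr * c2)/2 := by
    rw [hsumK Z Finset.univ, Finset.sum_congr rfl fun z (_ : z ∈ Z) => hc z,
      Finset.sum_const, nsmul_eq_mul, Finset.card_univ]
  have hXX : ∑ u : X, ∑ u' : X, K u u' = Mr * Mr * (Mr*(n+1) - c1) - (Mr * c2)/2 := by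
    rw [hsumK Finset.univ Finset.univ,
      Finset.sum_congr rfl fun u (_ : u ∈ (Finset.univ : Finset X)) => hc u,
      Finset.sum_const, nsmul_eq_mul, Finset.card_univ]
  have hZZ : ∑ z ∈ Z, ∑ z' ∈ Z, K z z'
      = Nr * Nr * (Mr*(n+1) - c1) - (∑ z₁ ∈ Z, ∑ z₂ ∈ Z, L z₁ z₂)/2 := hsumK Z Z
  have hRXX : ∑ x : X, ∑ y : X, L x y = Mr * c2 := by
    rw [Finset.sum_congr rfl fun x (_ : x ∈ (Finset.univ : Finset X)) => hc x,
      Finset.sum_const, nsmul_eq_mul, Finset.card_univ]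
  have hLfold : ∀ p q : X, (∑ u : X, |(d p u : ℝ) - (d q u : ℝ)|) = L p q := fun p q => rfl
  calc ∑ t ∈ Finset.range (n + 1), ∑ x : X,
        (Nr⁻¹ * ((Z.filter (fun z => d x z ≤ t)).card : ℝ)
          - Mr⁻¹ * ((Finset.univ.filter (fun z : X => d x z ≤ t)).card : ℝ)) ^ 2
      = ∑ t ∈ Finset.range (n+1), ∑ x : X,
          (Nr⁻¹^2 * ∑ z ∈ Z, ∑ z' ∈ Z, I x z t * I x z' t
            - 2*(Nr⁻¹*Mr⁻¹) * ∑ z ∈ Z, ∑ u : X, I x z t * I x u t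
            + Mr⁻¹^2 * ∑ u : X, ∑ u' : X, I x u t * I x u' t) := by
        refine Finset.sum_congr rfl fun t _ => Finset.sum_congr rfl fun x _ => ?_
        rw [hcardZ, hcardX, hpt]
    _ = Nr⁻¹^2 * (∑ z ∈ Z, ∑ z' ∈ Z, K z z')
        - 2*(Nr⁻¹*Mr⁻¹) * (∑ z ∈ Z, ∑ u : X, K z u)
        + Mr⁻¹^2 * (∑ u : X, ∑ u' : X, K u u') := by
        have pull : ∀ (c : ℝ) (F : ℕ → X → ℝ),
            ∑ t ∈ Finset.range (n+1), ∑ x : X, c * F t x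
            = c * ∑ t ∈ Finset.range (n+1), ∑ x : X, F t x := by
          intro c F
          rw [Finset.mul_sum]
          exact Finset.sum_congr rfl fun t _ => by rw [Finset.mul_sum]
        simp only [Finset.sum_add_distrib, Finset.sum_sub_distrib]
        rw [pull, pull, pull, hswap Z Z, hswap Z Finset.univ, hswap Finset.univ Finset.univ]
    _ = (1 / 2) *
        (Mr⁻¹ ^ 2 * ∑ x : X, ∑ y : X, ∑ u : X, |(d x u : ℝ) - (d y u : ℝ)|
          - Nr⁻¹ ^ 2 * ∑ z₁ ∈ Z, ∑ z₂ ∈ Z, ∑ u : X, |(d z₁ u : ℝ) - (d z₂ u : ℝ)|) := by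
        have hSZZ : ∑ z₁ ∈ Z, ∑ z₂ ∈ Z, (∑ u : X, |(d z₁ u : ℝ) - (d z₂ u : ℝ)|)
            = ∑ z₁ ∈ Z, ∑ z₂ ∈ Z, L z₁ z₂ := rfl
        have hSXX : ∑ x : X, ∑ y : X, (∑ u : X, |(d x u : ℝ) - (d y u : ℝ)|) = Mr * c2 := hRXX
        rw [hZZ, hZX, hXX, hSZZ, hSXX]
        have h1 : Nr⁻¹ * Nr = 1 := inv_mul_cancel₀ hN0
        have h2 : Mr⁻¹ * Mr = 1 := inv_mul_cancel₀ hM0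
        linear_combination ((Mr*(n+1) - c1) * (Nr⁻¹*Nr - Mr⁻¹*Mr) + Mr⁻¹*c2) * (h1 - h2)
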